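/- Let R be a commutative local ring, A an Azumaya algebra over R, and V a finitely generated left A-module. Then V is projective as a left A-module if and only if V is free of finite rank as an R-module. -/

import Mathlib

open TensorProduct

/-- The canonical map `A ⊗[R] Aᵐᵒᵖ →ₗ[R] End_R(A)`, `(x ⊗ y) · z = x * z * y`. -/
noncomputable def azumayaMap (R A : Type*) [CommRing R] [Ring A] [Algebra R A] :
    A ⊗[R] Aᵐᵒᵖ →ₗ[R] Module.End R A :=
  TensorProduct.lift <| LinearMap.mk₂ R
    (fun x y => LinearMap.mulLeft R x ∘ₗ LinearMap.mulRight R y.unop)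
    (fun x x' y => by ext z; simp [add_mul])
    (fun c x y => by ext z; simp [smul_mul_assoc])
    (fun x y y' => by ext z; simp [mul_add])
    (fun c x y => by ext z; simp [mul_smul_comm, smul_mul_assoc])

/-- Azumaya algebra: finitely generated projective faithful module whose sandwich map
`A ⊗[R] Aᵐᵒᵖ → End_R(A)` is bijective. -/
def IsAzumaya' (R A : Type*) [CommRing R] [Ring A] [Algebra R A] : Prop :=
  Module.Finite R A ∧ Module.Projective R A ∧ FaithfulSMul R A ∧
    Function.Bijective (azumayaMap R A)

/-- Central simple algebra over a field: finite-dimensional, center `k`, simple. -/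
def IsCentralSimple (k A : Type*) [Field k] [Ring A] [Algebra k A] : Prop :=
  FiniteDimensional k A ∧ Subalgebra.center k A = ⊥ ∧ IsSimpleRing A

section Aux

variable {R A : Type*} [CommRing R] [Ring A] [Algebra R A]

lemma azumayaMap_tmul (x : A) (y : Aᵐᵒᵖ) (z : A) :
    azumayaMap R A (x ⊗ₜ[R] y) z = x * z * y.unop := by simp [azumayaMap, mul_assoc]

lemma azumayaMap_mul (b c : A ⊗[R] Aᵐᵒᵖ) :
    azumayaMap R A (b * c) = azumayaMap R A b * azumayaMap R A c := by
  induction b using TensorProduct.induction_on with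
  | zero => simp
  | add b1 b2 h1 h2 => simp [add_mul, h1, h2]
  | tmul x y =>
    induction c using TensorProduct.induction_on with
    | zero => simp
    | add c1 c2 h1 h2 => simp [mul_add, h1, h2]
    | tmul x' y' =>
      ext z
      simp [Algebra.TensorProduct.tmul_mul_tmul, azumayaMap_tmul, Module.End.mul_apply,
        mul_assoc]

end Aux

theorem stmt7 {R A V : Type*} [CommRing R] [IsLocalRing R] [Ring A] [Algebra R A]
    (hA : IsAzumaya' R A)
    [AddCommGroup V] [Module A V] [Module R V] [IsScalarTower R A V] [Module.Finite A V] :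
    Module.Projective A V ↔ (Module.Free R V ∧ Module.Finite R V) := by
  classical
  obtain ⟨hfin, hproj, hfaith, hbij⟩ := hA
  haveI := hfin; haveI := hproj; haveI := hfaith
  obtain ⟨n, π, hπ⟩ := Module.Finite.exists_fin' A V
  haveI : Module.Projective R (DirectSum (Fin n) fun _ => A) :=
    inferInstanceAs (Module.Projective R (Π₀ _ : Fin n, A))
  haveI : Module.Projective R (Fin n → A) :=
    Module.Projective.of_equiv (DirectSum.linearEquivFunOnFintype R (Fin n) (fun _ => A))
  constructor
  · intro hPV
    haveI : Module.Finite R V := Module.Finite.trans A V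
    obtain ⟨s, hs⟩ := Module.projective_lifting_property π LinearMap.id hπ
    haveI : Module.Projective R V :=
      Module.Projective.of_split (s.restrictScalars R) (π.restrictScalars R)
        (by ext v; exact congrFun (congrArg DFunLike.coe hs) v)
    haveI : Module.FinitePresentation R V := Module.finitePresentation_of_projective R V
    exact ⟨Module.free_of_flat_of_isLocalRing, inferInstance⟩
  · rintro ⟨hfree, hfinV⟩
    -- A functional `lam : A →ₗ[R] R` with `lam 1 = 1`.
    haveI : Module.FinitePresentation R A := Module.finitePresentation_of_projective R A
    haveI : Module.Free R A := Module.free_of_flat_of_isLocalRing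
    obtain ⟨lam, hlam⟩ : ∃ lam : A →ₗ[R] R, lam 1 = 1 := by
      let b := Module.Free.chooseBasis R A
      have hex : ∃ i, IsUnit (b.repr 1 i) := by
        by_contra h
        push_neg at h
        have h1 : (1 : A) ∈ (IsLocalRing.maximalIdeal R) • (⊤ : Submodule R A) := by
          rw [← b.sum_repr 1]
          refine Submodule.sum_mem _ fun i _ => Submodule.smul_mem_smul (h i) trivial
        have htop : (⊤ : Submodule R A) ≤ (IsLocalRing.maximalIdeal R) • ⊤ := by
          intro z _
          have : z * 1 ∈ (IsLocalRing.maximalIdeal R) • (⊤ : Submodule R A) := by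
            refine Submodule.smul_induction_on h1 (fun r hr x _ => ?_) (fun x y hx hy => ?_)
            · rw [mul_smul_comm]
              exact Submodule.smul_mem_smul hr trivial
            · rw [mul_add]; exact Submodule.add_mem _ hx hy
          simpa using this
        have hbot : (⊤ : Submodule R A) = ⊥ :=
          Submodule.eq_bot_of_le_smul_of_le_jacobson_bot (IsLocalRing.maximalIdeal R) ⊤
            Module.Finite.fg_top htop (IsLocalRing.maximalIdeal_le_jacobson ⊥)
        have : Subsingleton A := by
          rw [← Submodule.subsingleton_iff R]
          exact subsingleton_of_bot_eq_top hbot.symm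
        have h01 : (0 : R) = 1 := by
          refine eq_of_smul_eq_smul (M := R) (α := A) (fun a => ?_)
          exact Subsingleton.elim _ _
        exact zero_ne_one h01
      obtain ⟨i, hi⟩ := hex
      refine ⟨(hi.unit⁻¹ : Rˣ).1 • b.coord i, ?_⟩
      simp only [LinearMap.smul_apply, Module.Basis.coord_apply, smul_eq_mul]
      exact IsUnit.val_inv_mul hi
    -- The separability idempotent `e`.
    let Feq := LinearEquiv.ofBijective (azumayaMap R A) hbij
    let E : Module.End R A := LinearMap.smulRight lam (1 : A)
    let e : A ⊗[R] Aᵐᵒᵖ := Feq.symm E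
    have hFe : azumayaMap R A e = E := Feq.apply_symm_apply E
    have key : ∀ a : A,
        ((a ⊗ₜ[R] (1 : Aᵐᵒᵖ)) * e) = (((1 : A) ⊗ₜ[R] (MulOpposite.op a)) * e) := by
      intro a
      apply hbij.injective
      rw [azumayaMap_mul, azumayaMap_mul, hFe]
      ext z
      simp [azumayaMap_tmul, Module.End.mul_apply, E, mul_smul_comm, smul_mul_assoc]
    -- R-linear section of π
    haveI : Module.Projective R V := Module.Projective.of_free
    obtain ⟨σ, hσ⟩ := Module.projective_lifting_property (π.restrictScalars R) LinearMap.id hπ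
    have hσ' : ∀ v : V, π (σ v) = v := fun v =>
      congrFun (congrArg DFunLike.coe hσ) v
    -- averaging operator
    let Φ : V → (A ⊗[R] Aᵐᵒᵖ →ₗ[R] (Fin n → A)) := fun v =>
      TensorProduct.lift <| LinearMap.mk₂ R
        (fun x y => x • σ (y.unop • v))
        (fun x x' y => add_smul x x' _)
        (fun c x y => smul_assoc c x _)
        (fun x y y' => by simp [add_smul, smul_add])
        (fun c x y => by
          show x • σ ((c • y).unop • v) = c • (x • σ (y.unop • v))
          rw [MulOpposite.unop_smul, smul_assoc, map_smul, smul_comm])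
    have hΦ_tmul : ∀ (v : V) (x : A) (y : Aᵐᵒᵖ),
        Φ v (x ⊗ₜ[R] y) = x • σ (y.unop • v) := fun v x y => rfl
    have hΦ_add : ∀ (b : A ⊗[R] Aᵐᵒᵖ) (v w : V), Φ (v + w) b = Φ v b + Φ w b := by
      intro b v w
      induction b using TensorProduct.induction_on with
      | zero => simp
      | add b1 b2 h1 h2 => simp only [map_add, h1, h2]; abel
      | tmul x y => simp [hΦ_tmul, smul_add]
    have hΦ_left : ∀ (b : A ⊗[R] Aᵐᵒᵖ) (v : V) (a : A),
        Φ v ((a ⊗ₜ[R] (1 : Aᵐᵒᵖ)) * b) = a • Φ v b := by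
      intro b v a
      induction b using TensorProduct.induction_on with
      | zero => simp
      | add b1 b2 h1 h2 => simp only [mul_add, map_add, h1, h2, smul_add]
      | tmul x y =>
        rw [Algebra.TensorProduct.tmul_mul_tmul, hΦ_tmul, hΦ_tmul, one_mul, mul_smul]
    have hΦ_right : ∀ (b : A ⊗[R] Aᵐᵒᵖ) (v : V) (a : A),
        Φ v (((1 : A) ⊗ₜ[R] (MulOpposite.op a)) * b) = Φ (a • v) b := by
      intro b v a
      induction b using TensorProduct.induction_on with
      | zero => simp
      | add b1 b2 h1 h2 => simp only [mul_add, map_add, h1, h2]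
      | tmul x y =>
        rw [Algebra.TensorProduct.tmul_mul_tmul, hΦ_tmul, hΦ_tmul, one_mul]
        congr 1
        rw [MulOpposite.unop_mul, MulOpposite.unop_op, mul_smul]
    have hΦ_pi : ∀ (b : A ⊗[R] Aᵐᵒᵖ) (v : V), π (Φ v b) = (azumayaMap R A b 1) • v := by
      intro b v
      induction b using TensorProduct.induction_on with
      | zero => simp
      | add b1 b2 h1 h2 => simp only [map_add, h1, h2, LinearMap.add_apply, add_smul]
      | tmul x y =>
        rw [hΦ_tmul, map_smul, hσ', azumayaMap_tmul, mul_one, mul_smul]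
    -- the A-linear section
    let σA : V →ₗ[A] (Fin n → A) :=
      { toFun := fun v => Φ v e
        map_add' := fun v w => hΦ_add e v w
        map_smul' := fun a v => by
          simp only [RingHom.id_apply]
          rw [← hΦ_right e v a, ← key a, hΦ_left e v a] }
    have hsec : π.comp σA = LinearMap.id := by
      ext v
      show π (Φ v e) = v
      rw [hΦ_pi, hFe]
      show (lam 1 • (1 : A)) • v = v
      rw [hlam, one_smul, one_smul]
    haveI : Module.Free A (Fin n → A) := inferInstance
    exact Module.Projective.of_split σA π hsec
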